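/- Let I ⊆ ℝ be an interval containing 0, φ : I → ℝ be C² with φ > 0, φ(0) = 1, φ' > 0 and φ'' ≤ 0 on I. Let Ω ⊆ ℝⁿ be open, v, h ∈ C^{2,1}(Ω × (0,T]) with h > 0, v taking values in I, and ∂_t h − Δh ≥ 0. Let V be continuous, q ∈ ℝ \ {0}, and set u := h·φ(v). If ∂_t u − Δu + V·u^q ≤ ∂_t h − Δh, then ∂_t(hv) − Δ(hv) + h^q·V·φ(v)^q/φ'(v) ≤ 0 in Ω × (0,T]. -/

import Mathlib

open Set

noncomputable def lap {n : ℕ} (f : EuclideanSpace ℝ (Fin n) → ℝ)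
    (x : EuclideanSpace ℝ (Fin n)) : ℝ :=
  ∑ i, fderiv ℝ (fun y => fderiv ℝ f y (EuclideanSpace.single i 1)) x
      (EuclideanSpace.single i 1)

noncomputable def timeDeriv {n : ℕ} (u : EuclideanSpace ℝ (Fin n) → ℝ → ℝ)
    (x : EuclideanSpace ℝ (Fin n)) (t : ℝ) : ℝ :=
  deriv (u x) t

noncomputable def lapSpace {n : ℕ} (u : EuclideanSpace ℝ (Fin n) → ℝ → ℝ)
    (x : EuclideanSpace ℝ (Fin n)) (t : ℝ) : ℝ :=
  lap (fun y => u y t) x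

section Helpers

variable {n : ℕ}

lemma chain_apply (ψ : ℝ → ℝ) (w : EuclideanSpace ℝ (Fin n) → ℝ) (x : EuclideanSpace ℝ (Fin n))
    (hw : DifferentiableAt ℝ w x) (hψ : DifferentiableAt ℝ ψ (w x)) (e : EuclideanSpace ℝ (Fin n)) :
    fderiv ℝ (fun y => ψ (w y)) x e = deriv ψ (w x) * fderiv ℝ w x e := by
  have h1 : HasFDerivAt (fun y => ψ (w y)) (deriv ψ (w x) • fderiv ℝ w x) x :=
    hψ.hasDerivAt.comp_hasFDerivAt x hw.hasFDerivAt
  rw [h1.fderiv]; simp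

lemma ev_diff {f : EuclideanSpace ℝ (Fin n) → ℝ} {x : EuclideanSpace ℝ (Fin n)}
    (hf : ContDiffAt ℝ 2 f x) : ∀ᶠ y in nhds x, DifferentiableAt ℝ f y := by
  filter_upwards [hf.eventually (by norm_num)] with y hy
  exact hy.differentiableAt two_ne_zero

lemma diff_d1 {f : EuclideanSpace ℝ (Fin n) → ℝ} {x : EuclideanSpace ℝ (Fin n)}
    (hf : ContDiffAt ℝ 2 f x) (e : EuclideanSpace ℝ (Fin n)) :
    DifferentiableAt ℝ (fun y => fderiv ℝ f y e) x := by
  have h1 : ContDiffAt ℝ 1 (fderiv ℝ f) x := hf.fderiv_right (by norm_num)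
  exact (h1.differentiableAt one_ne_zero).clm_apply (differentiableAt_const e)

lemma d2_mul (g k : EuclideanSpace ℝ (Fin n) → ℝ) (x : EuclideanSpace ℝ (Fin n))
    (hg : ContDiffAt ℝ 2 g x) (hk : ContDiffAt ℝ 2 k x) (e : EuclideanSpace ℝ (Fin n)) :
    fderiv ℝ (fun y => fderiv ℝ (fun z => g z * k z) y e) x e
      = fderiv ℝ (fun y => fderiv ℝ g y e) x e * k x
        + 2 * (fderiv ℝ g x e * fderiv ℝ k x e)
        + g x * fderiv ℝ (fun y => fderiv ℝ k y e) x e := by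
  have heq : (fun y => fderiv ℝ (fun z => g z * k z) y e)
      =ᶠ[nhds x] fun y => fderiv ℝ g y e * k y + g y * fderiv ℝ k y e := by
    filter_upwards [ev_diff hg, ev_diff hk] with y hgy hky
    rw [fderiv_fun_mul hgy hky]
    simp only [ContinuousLinearMap.add_apply, ContinuousLinearMap.smul_apply, smul_eq_mul]
    ring
  rw [heq.fderiv_eq]
  rw [fderiv_fun_add ((diff_d1 hg e).fun_mul (hk.differentiableAt two_ne_zero))
    ((hg.differentiableAt two_ne_zero).fun_mul (diff_d1 hk e)),
    fderiv_fun_mul (diff_d1 hg e) (hk.differentiableAt two_ne_zero),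
    fderiv_fun_mul (hg.differentiableAt two_ne_zero) (diff_d1 hk e)]
  simp
  ring

lemma d2_comp (φ : ℝ → ℝ) (I : Set ℝ) (hIopen : IsOpen I) (hφ : ContDiffOn ℝ 2 φ I)
    (w : EuclideanSpace ℝ (Fin n) → ℝ) (x : EuclideanSpace ℝ (Fin n))
    (hw : ContDiffAt ℝ 2 w x) (hwx : w x ∈ I) (e : EuclideanSpace ℝ (Fin n)) :
    fderiv ℝ (fun y => fderiv ℝ (fun z => φ (w z)) y e) x e
      = deriv (deriv φ) (w x) * (fderiv ℝ w x e)^2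
        + deriv φ (w x) * fderiv ℝ (fun y => fderiv ℝ w y e) x e := by
  have hφd : ∀ s ∈ I, DifferentiableAt ℝ φ s := fun s hs =>
    ((hφ.differentiableOn two_ne_zero) s hs).differentiableAt (hIopen.mem_nhds hs)
  have hφ' : ContDiffOn ℝ 1 (deriv φ) I := hφ.deriv_of_isOpen hIopen (by norm_num)
  have hφ'd : DifferentiableAt ℝ (deriv φ) (w x) :=
    ((hφ'.differentiableOn one_ne_zero) (w x) hwx).differentiableAt (hIopen.mem_nhds hwx)
  have hwc : ∀ᶠ y in nhds x, w y ∈ I :=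
    (hw.differentiableAt two_ne_zero).continuousAt.eventually_mem (hIopen.mem_nhds hwx)
  have heq : (fun y => fderiv ℝ (fun z => φ (w z)) y e)
      =ᶠ[nhds x] fun y => deriv φ (w y) * fderiv ℝ w y e := by
    filter_upwards [ev_diff hw, hwc] with y hwy hyI
    exact chain_apply φ w y hwy (hφd _ hyI) e
  rw [heq.fderiv_eq]
  have hdc : DifferentiableAt ℝ (fun y => deriv φ (w y)) x :=
    hφ'd.comp x (hw.differentiableAt two_ne_zero)
  rw [fderiv_fun_mul hdc (diff_d1 hw e)]
  have := chain_apply (deriv φ) w x (hw.differentiableAt two_ne_zero) hφ'd e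
  simp only [ContinuousLinearMap.add_apply, ContinuousLinearMap.smul_apply, smul_eq_mul, this]
  ring

lemma lap_mul (g k : EuclideanSpace ℝ (Fin n) → ℝ) (x : EuclideanSpace ℝ (Fin n))
    (hg : ContDiffAt ℝ 2 g x) (hk : ContDiffAt ℝ 2 k x) :
    lap (fun y => g y * k y) x
      = lap g x * k x
        + 2 * ∑ i, fderiv ℝ g x (EuclideanSpace.single i 1) * fderiv ℝ k x (EuclideanSpace.single i 1)
        + g x * lap k x := by
  unfold lap
  rw [Finset.sum_congr rfl (fun i _ => d2_mul g k x hg hk (EuclideanSpace.single i 1))]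
  rw [Finset.sum_add_distrib, Finset.sum_add_distrib, ← Finset.sum_mul, ← Finset.mul_sum,
    ← Finset.mul_sum]

lemma lap_comp (φ : ℝ → ℝ) (I : Set ℝ) (hIopen : IsOpen I) (hφ : ContDiffOn ℝ 2 φ I)
    (w : EuclideanSpace ℝ (Fin n) → ℝ) (x : EuclideanSpace ℝ (Fin n))
    (hw : ContDiffAt ℝ 2 w x) (hwx : w x ∈ I) :
    lap (fun y => φ (w y)) x
      = deriv (deriv φ) (w x) * ∑ i, (fderiv ℝ w x (EuclideanSpace.single i 1))^2
        + deriv φ (w x) * lap w x := by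
  unfold lap
  rw [Finset.sum_congr rfl (fun i _ => d2_comp φ I hIopen hφ w x hw hwx (EuclideanSpace.single i 1))]
  rw [Finset.sum_add_distrib, ← Finset.mul_sum, ← Finset.mul_sum]

lemma tangent_line (I : Set ℝ) (hIopen : IsOpen I) (hIconn : I.OrdConnected) (h0I : (0:ℝ) ∈ I)
    (φ : ℝ → ℝ) (hφ : ContDiffOn ℝ 2 φ I) (hφ0 : φ 0 = 1)
    (hφ'' : ∀ s ∈ I, deriv (deriv φ) s ≤ 0) :
    ∀ s ∈ I, deriv φ s * s ≤ φ s - 1 := by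
  intro s hs
  have hconv : Convex ℝ I := convex_iff_ordConnected.2 hIconn
  have hφ' : ContDiffOn ℝ 1 (deriv φ) I := hφ.deriv_of_isOpen hIopen (by norm_num)
  have hφ'd : DifferentiableOn ℝ (deriv φ) I := hφ'.differentiableOn one_ne_zero
  have hanti : AntitoneOn (deriv φ) I := by
    apply antitoneOn_of_deriv_nonpos hconv (hφ'.continuousOn)
    · rw [hIopen.interior_eq]; exact hφ'd
    · rw [hIopen.interior_eq]; exact hφ''
  have hφd : ∀ r ∈ I, DifferentiableAt ℝ φ r := fun r hr =>
    ((hφ.differentiableOn two_ne_zero) r hr).differentiableAt (hIopen.mem_nhds hr)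
  rcases lt_trichotomy s 0 with hlt | heq | hgt
  · have hsub : Icc s 0 ⊆ I := hIconn.out hs h0I
    obtain ⟨c, hc, hceq⟩ := exists_deriv_eq_slope φ hlt
      (ContinuousOn.mono (hφ.continuousOn) hsub)
      (fun r hr => (hφd r (hsub (Ioo_subset_Icc_self hr))).differentiableWithinAt)
    have hcI : c ∈ I := hsub (Ioo_subset_Icc_self hc)
    have h1 : deriv φ c ≤ deriv φ s := hanti hs hcI hc.1.le
    have hsne : s ≠ 0 := ne_of_lt hlt
    have h2 : deriv φ c * (0 - s) = φ 0 - φ s := by rw [hceq]; field_simp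
    rw [hφ0] at h2
    nlinarith [h2]
  · simp [heq, hφ0]
  · have hsub : Icc 0 s ⊆ I := hIconn.out h0I hs
    obtain ⟨c, hc, hceq⟩ := exists_deriv_eq_slope φ hgt
      (ContinuousOn.mono (hφ.continuousOn) hsub)
      (fun r hr => (hφd r (hsub (Ioo_subset_Icc_self hr))).differentiableWithinAt)
    have hcI : c ∈ I := hsub (Ioo_subset_Icc_self hc)
    have h1 : deriv φ s ≤ deriv φ c := hanti hcI hs hc.2.le
    have hsne : s ≠ 0 := ne_of_gt hgt
    have h2 : deriv φ c * (s - 0) = φ s - φ 0 := by rw [hceq]; field_simp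
    rw [hφ0] at h2
    nlinarith [h2]

end Helpers

/-- Lemma 4.3 (Euclidean case): if `u = h·φ(v)` satisfies
`∂ₜu − Δu + V u^q ≤ ∂ₜh − Δh` in `Q_T` (with `φ(0)=1`, `φ' > 0`, `φ'' ≤ 0`,
`∂ₜh − Δh ≥ 0`), then `∂ₜ(hv) − Δ(hv) + h^q V φ(v)^q/φ'(v) ≤ 0` in `Q_T`. -/
theorem lemma43_le {n : ℕ} (T : ℝ)
    (Ω : Set (EuclideanSpace ℝ (Fin n))) (hΩ : IsOpen Ω)
    (I : Set ℝ) (hIopen : IsOpen I) (hIconn : I.OrdConnected) (h0I : (0:ℝ) ∈ I)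
    (φ : ℝ → ℝ) (hφ : ContDiffOn ℝ 2 φ I)
    (hφpos : ∀ s ∈ I, 0 < φ s) (hφ0 : φ 0 = 1)
    (hφ'pos : ∀ s ∈ I, 0 < deriv φ s)
    (hφ'' : ∀ s ∈ I, deriv (deriv φ) s ≤ 0)
    (v h : EuclideanSpace ℝ (Fin n) → ℝ → ℝ)
    (hvx : ∀ x ∈ Ω, ∀ t ∈ Ioc (0:ℝ) T, ContDiffAt ℝ 2 (fun y => v y t) x)
    (hhx : ∀ x ∈ Ω, ∀ t ∈ Ioc (0:ℝ) T, ContDiffAt ℝ 2 (fun y => h y t) x)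
    (hvt : ∀ x ∈ Ω, ∀ t ∈ Ioc (0:ℝ) T, DifferentiableAt ℝ (v x) t)
    (hht : ∀ x ∈ Ω, ∀ t ∈ Ioc (0:ℝ) T, DifferentiableAt ℝ (h x) t)
    (hvI : ∀ x ∈ Ω, ∀ t ∈ Ioc (0:ℝ) T, v x t ∈ I)
    (hhpos : ∀ x ∈ Ω, ∀ t ∈ Ioc (0:ℝ) T, 0 < h x t)
    (hheat : ∀ x ∈ Ω, ∀ t ∈ Ioc (0:ℝ) T, 0 ≤ timeDeriv h x t - lapSpace h x t)
    (V : EuclideanSpace ℝ (Fin n) → ℝ → ℝ)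
    (hV : ContinuousOn (fun p : EuclideanSpace ℝ (Fin n) × ℝ => V p.1 p.2) (Ω ×ˢ Ioc 0 T))
    (q : ℝ) (hq : q ≠ 0)
    (u : EuclideanSpace ℝ (Fin n) → ℝ → ℝ)
    (hu : u = fun y s => h y s * φ (v y s))
    (hineq : ∀ x ∈ Ω, ∀ t ∈ Ioc (0:ℝ) T,
      timeDeriv u x t - lapSpace u x t + V x t * u x t ^ q
        ≤ timeDeriv h x t - lapSpace h x t) :
    ∀ x ∈ Ω, ∀ t ∈ Ioc (0:ℝ) T,
      timeDeriv (fun y s => h y s * v y s) x t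
          - lapSpace (fun y s => h y s * v y s) x t
          + h x t ^ q * V x t * φ (v x t) ^ q / deriv φ (v x t) ≤ 0 := by
  subst hu
  intro x hx t ht
  -- notation
  have hc : v x t ∈ I := hvI x hx t ht
  have ha : 0 < h x t := hhpos x hx t ht
  have hv2 : ContDiffAt ℝ 2 (fun y => v y t) x := hvx x hx t ht
  have hh2 : ContDiffAt ℝ 2 (fun y => h y t) x := hhx x hx t ht
  have hvtd : DifferentiableAt ℝ (v x) t := hvt x hx t ht
  have hhtd : DifferentiableAt ℝ (h x) t := hht x hx t ht
  have hφd : DifferentiableAt ℝ φ (v x t) :=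
    ((hφ.differentiableOn two_ne_zero) _ hc).differentiableAt (hIopen.mem_nhds hc)
  have hφv2 : ContDiffAt ℝ 2 (fun y => φ (v y t)) x :=
    (hφ.contDiffAt (hIopen.mem_nhds hc)).comp x hv2
  have hp : 0 < φ (v x t) := hφpos _ hc
  have hp' : 0 < deriv φ (v x t) := hφ'pos _ hc
  have hp'' : deriv (deriv φ) (v x t) ≤ 0 := hφ'' _ hc
  -- time derivatives
  have hφvt : DifferentiableAt ℝ (fun s => φ (v x s)) t := hφd.comp t hvtd
  have E1 : timeDeriv (fun y s => h y s * φ (v y s)) x t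
      = deriv (h x) t * φ (v x t) + h x t * (deriv φ (v x t) * deriv (v x) t) := by
    show deriv (fun s => h x s * φ (v x s)) t = _
    rw [deriv_fun_mul hhtd hφvt]
    congr 1
    congr 1
    exact (hφd.hasDerivAt.comp t hvtd.hasDerivAt).deriv
  have E2 : timeDeriv (fun y s => h y s * v y s) x t
      = deriv (h x) t * v x t + h x t * deriv (v x) t := by
    show deriv (fun s => h x s * v x s) t = _
    rw [deriv_fun_mul hhtd hvtd]
  -- space laplacians
  have E3 : lapSpace (fun y s => h y s * φ (v y s)) x t
      = lap (fun y => h y t) x * φ (v x t)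
        + 2 * (deriv φ (v x t) *
            ∑ i, fderiv ℝ (fun y => h y t) x (EuclideanSpace.single i 1)
              * fderiv ℝ (fun y => v y t) x (EuclideanSpace.single i 1))
        + h x t * (deriv (deriv φ) (v x t)
              * ∑ i, (fderiv ℝ (fun y => v y t) x (EuclideanSpace.single i 1))^2
            + deriv φ (v x t) * lap (fun y => v y t) x) := by
    show lap (fun y => h y t * φ (v y t)) x = _
    have hmid : ∑ i, fderiv ℝ (fun y => h y t) x (EuclideanSpace.single i 1)
          * fderiv ℝ (fun y => φ (v y t)) x (EuclideanSpace.single i 1)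
        = deriv φ (v x t) *
            ∑ i, fderiv ℝ (fun y => h y t) x (EuclideanSpace.single i 1)
              * fderiv ℝ (fun y => v y t) x (EuclideanSpace.single i 1) := by
      rw [Finset.mul_sum]
      refine Finset.sum_congr rfl fun i _ => ?_
      rw [chain_apply φ (fun y => v y t) x (hv2.differentiableAt two_ne_zero) hφd]
      ring
    rw [lap_mul (fun y => h y t) (fun y => φ (v y t)) x hh2 hφv2,
      lap_comp φ I hIopen hφ (fun y => v y t) x hv2 hc, hmid]
  have E4 : lapSpace (fun y s => h y s * v y s) x t
      = lap (fun y => h y t) x * v x t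
        + 2 * ∑ i, fderiv ℝ (fun y => h y t) x (EuclideanSpace.single i 1)
              * fderiv ℝ (fun y => v y t) x (EuclideanSpace.single i 1)
        + h x t * lap (fun y => v y t) x := by
    show lap (fun y => h y t * v y t) x = _
    rw [lap_mul (fun y => h y t) (fun y => v y t) x hh2 hv2]
  -- rpow
  have E5 : (h x t * φ (v x t)) ^ q = h x t ^ q * φ (v x t) ^ q :=
    Real.mul_rpow ha.le hp.le
  -- heat operator facts
  have hA : 0 ≤ deriv (h x) t - lap (fun y => h y t) x := hheat x hx t ht
  have hG : 0 ≤ ∑ i, (fderiv ℝ (fun y => v y t) x (EuclideanSpace.single i 1))^2 :=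
    Finset.sum_nonneg fun i _ => sq_nonneg _
  have htan : deriv φ (v x t) * v x t ≤ φ (v x t) - 1 :=
    tangent_line I hIopen hIconn h0I φ hφ hφ0 hφ'' _ hc
  have hyp := hineq x hx t ht
  rw [E1, E3] at hyp
  simp only [timeDeriv, lapSpace] at hyp
  rw [E5] at hyp
  -- abbreviate
  set A := deriv (h x) t - lap (fun y => h y t) x with hAdef
  set p := φ (v x t)
  set p' := deriv φ (v x t)
  set p'' := deriv (deriv φ) (v x t)
  set S := ∑ i, fderiv ℝ (fun y => h y t) x (EuclideanSpace.single i 1)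
              * fderiv ℝ (fun y => v y t) x (EuclideanSpace.single i 1) with hS
  set G := ∑ i, (fderiv ℝ (fun y => v y t) x (EuclideanSpace.single i 1))^2 with hG2
  set a := h x t
  set c := v x t
  set vt' := deriv (v x) t
  set Lv := lap (fun y => v y t) x
  set W := a ^ q * V x t * p ^ q with hW
  rw [E2, E4]
  have hapG : a * (p'' * G) ≤ 0 :=
    mul_nonpos_of_nonneg_of_nonpos ha.le (mul_nonpos_of_nonpos_of_nonneg hp'' hG)
  have hprod : A * (p' * c) ≤ A * (p - 1) := mul_le_mul_of_nonneg_left htan hA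
  have key : p' * (A * c + (a * vt' - 2 * S - a * Lv)) + W ≤ 0 := by
    nlinarith [hyp, hprod, hapG]
  have hfin : deriv (h x) t * c + a * vt' - (lap (fun y => h y t) x * c + 2 * S + a * Lv)
        + W / p'
      = (p' * (A * c + (a * vt' - 2 * S - a * Lv)) + W) / p' := by
    rw [hAdef]
    field_simp
    ring
  rw [hfin]
  exact div_nonpos_of_nonpos_of_nonneg key hp'.le
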